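/- Let G(T) be a connected threshold graph on {1,…,n} (n ≥ 2) with construction sequence T and Laplacian matrix L, and let s = |{d(1),…,d(n)}| be the number of distinct vertex degrees. For every subset S ⊆ {1,…,n} with |S| < n − s, there exist a real number λ and a nonzero vector v ∈ ℝ^n with L·v = λ·v and v_j = 0 for all j ∈ S. (Hence fewer than n − s control nodes can never render the Laplacian network controllable, so the minimum number of control nodes is n − s.) -/

import Mathlib

open Finset Matrix Polynomial

/-- The threshold graph on `Fin n` (vertex `i` of the paper corresponds to `⟨i-1, _⟩ : Fin n`)
with construction sequence `T` : two distinct vertices are adjacent iff the later one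
(in the construction order) was added by a join operation. -/
def thresholdGraph (n : ℕ) (T : Fin n → Bool) : SimpleGraph (Fin n) where
  Adj i j := i ≠ j ∧ T (max i j) = true
  symm := by
    constructor
    intro i j h
    exact ⟨h.1.symm, by rw [max_comm]; exact h.2⟩
  loopless := by
    constructor
    intro i h
    exact h.1 rfl

instance thresholdGraph.instDecidableRelAdj (n : ℕ) (T : Fin n → Bool) :
    DecidableRel (thresholdGraph n T).Adj :=
  fun i j => decidable_of_iff (i ≠ j ∧ T (max i j) = true) Iff.rfl

/-- In a threshold graph, vertices of equal degree are twins. -/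
lemma thresholdGraph_twin {n : ℕ} {T : Fin n → Bool} {i j : Fin n} (hij : i < j)
    (hd : (thresholdGraph n T).degree i = (thresholdGraph n T).degree j) :
    ∀ k, k ≠ i → k ≠ j →
      ((thresholdGraph n T).Adj k i ↔ (thresholdGraph n T).Adj k j) := by
  set G := thresholdGraph n T with hG
  have hne : i ≠ j := hij.ne
  set Ni := (G.neighborFinset i).erase j with hNi
  set Nj := (G.neighborFinset j).erase i with hNj
  have hcard : Ni.card = Nj.card := by
    by_cases hadj : G.Adj i j
    · rw [hNi, hNj, Finset.card_erase_of_mem (by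
          rw [SimpleGraph.mem_neighborFinset]; exact hadj),
        Finset.card_erase_of_mem (by
          rw [SimpleGraph.mem_neighborFinset]; exact hadj.symm)]
      have h2 : (G.neighborFinset i).card = (G.neighborFinset j).card := hd
      omega
    · rw [hNi, hNj, Finset.erase_eq_of_notMem (by
          rw [SimpleGraph.mem_neighborFinset]; exact hadj),
        Finset.erase_eq_of_notMem (by
          rw [SimpleGraph.mem_neighborFinset]; exact fun h => hadj h.symm)]
      exact hd
  have hset : Ni = Nj := by
    by_cases hTj : T j = true
    · -- Ni ⊆ Nj
      apply Finset.eq_of_subset_of_card_le _ hcard.ge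
      intro k hk
      rw [hNi, Finset.mem_erase, SimpleGraph.mem_neighborFinset] at hk
      obtain ⟨hkj, hik⟩ := hk
      rw [hNj, Finset.mem_erase, SimpleGraph.mem_neighborFinset]
      rw [hG] at hik
      refine ⟨fun h => hik.1 h.symm, ?_⟩
      rw [hG]
      refine ⟨fun h => hkj h.symm, ?_⟩
      rcases le_or_gt k j with hkle | hjk
      · rw [max_eq_left hkle]; exact hTj
      · rw [max_eq_right hjk.le]
        have h2 := hik.2
        rwa [max_eq_right (hij.trans hjk).le] at h2
    · -- Nj ⊆ Ni
      refine (Finset.eq_of_subset_of_card_le ?_ hcard.le).symm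
      intro k hk
      rw [hNj, Finset.mem_erase, SimpleGraph.mem_neighborFinset] at hk
      obtain ⟨hki, hjk⟩ := hk
      rw [hG] at hjk
      obtain ⟨hjk1, hjk2⟩ := hjk
      have hjltk : j < k := by
        rcases lt_or_ge j k with h | h
        · exact h
        · exfalso; rw [max_eq_left h] at hjk2; exact hTj hjk2
      rw [hNi, Finset.mem_erase, SimpleGraph.mem_neighborFinset]
      refine ⟨hjltk.ne', ?_⟩
      rw [hG]
      refine ⟨(hij.trans hjltk).ne, ?_⟩
      rw [max_eq_right (hij.trans hjltk).le]
      rwa [max_eq_right hjltk.le] at hjk2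
  intro k hki hkj
  have h1 : G.Adj k i ↔ k ∈ Ni := by
    rw [hNi, Finset.mem_erase, SimpleGraph.mem_neighborFinset, G.adj_comm]
    exact ⟨fun h => ⟨hkj, h⟩, fun h => h.2⟩
  have h2 : G.Adj k j ↔ k ∈ Nj := by
    rw [hNj, Finset.mem_erase, SimpleGraph.mem_neighborFinset, G.adj_comm]
    exact ⟨fun h => ⟨hki, h⟩, fun h => h.2⟩
  rw [h1, h2, hset]

/-- if `s` is the number of distinct vertex degrees of a connected threshold
graph, then for every set `S` of fewer than `n − s` control nodes there is a nonzero
eigenvector of the Laplacian vanishing on `S`; hence (by the PBH test) fewer than `n − s`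
control nodes can never render the Laplacian network controllable. -/
theorem thresholdGraph_uncontrollable_of_few_controls (n : ℕ) (T : Fin n → Bool) (hn : 2 ≤ n)
    (hT1 : T ⟨0, lt_of_lt_of_le two_pos hn⟩ = false)
    (hconn : (thresholdGraph n T).Connected)
    (S : Finset (Fin n))
    (hS : S.card < n - (Finset.univ.image (fun i => (thresholdGraph n T).degree i)).card) :
    ∃ (lam : ℝ) (v : Fin n → ℝ), v ≠ 0 ∧
      (thresholdGraph n T).lapMatrix ℝ *ᵥ v = lam • v ∧ ∀ j ∈ S, v j = 0 := by
  set G := thresholdGraph n T with hG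
  set D := Finset.univ.image (fun i => G.degree i) with hD
  -- pigeonhole: two vertices outside S with equal degree
  have hcompl : D.card < Sᶜ.card := by
    have h1 : Sᶜ.card = n - S.card := by
      rw [Finset.card_compl, Fintype.card_fin]
    omega
  obtain ⟨i, hi, j, hj, hne, hdeg⟩ :=
    Finset.exists_ne_map_eq_of_card_lt_of_maps_to hcompl
      (fun a _ => Finset.mem_image_of_mem (fun i => G.degree i) (Finset.mem_univ a))
  rw [Finset.mem_compl] at hi hj
  -- wlog i < j
  have main : ∀ a b : Fin n, a < b → a ∉ S → b ∉ S → G.degree a = G.degree b →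
      ∃ (lam : ℝ) (v : Fin n → ℝ), v ≠ 0 ∧
        G.lapMatrix ℝ *ᵥ v = lam • v ∧ ∀ j ∈ S, v j = 0 := by
    intro a b hab haS hbS hd
    have htwin := thresholdGraph_twin hab hd
    set v : Fin n → ℝ := fun k => (if k = a then (1:ℝ) else 0) - (if k = b then 1 else 0)
      with hv
    refine ⟨(G.degree a : ℝ) + (if G.Adj a b then 1 else 0), v, ?_, ?_, ?_⟩
    · intro h
      have := congrFun h a
      simp [hv, hab.ne] at this
    · funext k
      rw [SimpleGraph.lapMatrix_mulVec_apply]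
      have hsum : ∑ u ∈ G.neighborFinset k, v u =
          (if a ∈ G.neighborFinset k then (1:ℝ) else 0) -
          (if b ∈ G.neighborFinset k then (1:ℝ) else 0) := by
        rw [hv]
        rw [Finset.sum_sub_distrib, Finset.sum_ite_eq' _ a (fun _ => (1:ℝ)),
          Finset.sum_ite_eq' _ b (fun _ => (1:ℝ))]
      rw [hsum]
      simp only [SimpleGraph.mem_neighborFinset, Pi.smul_apply, smul_eq_mul]
      by_cases hka : k = a
      · subst hka
        rw [if_neg (G.irrefl (v := k))]
        simp only [hv, if_pos rfl, if_neg hab.ne]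
        ring_nf
        simp
      · by_cases hkb : k = b
        · subst hkb
          rw [if_neg (G.irrefl (v := k))]
          have hcomm : (if G.Adj k a then (1:ℝ) else 0) = (if G.Adj a k then 1 else 0) :=
            if_congr (G.adj_comm k a) rfl rfl
          rw [hcomm]
          simp only [hv, if_neg hab.ne', if_pos rfl]
          rw [hd]
          ring_nf
          simp
        · have h1 : G.Adj k a ↔ G.Adj k b := htwin k hka hkb
          simp only [hv, if_neg hka, if_neg hkb]
          rw [if_congr h1 rfl rfl]
          ring
    · intro k hk
      have hka : k ≠ a := fun h => haS (h ▸ hk)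
      have hkb : k ≠ b := fun h => hbS (h ▸ hk)
      simp [hv, hka, hkb]
  rcases hne.lt_or_gt with h | h
  · exact main i j h hi hj hdeg
  · exact main j i h hj hi hdeg.symm
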